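/- arXiv:2009.09821 — 3 statements merged into one kernel-verified Lean document; each statement's English description precedes it below -/
import Mathlib

section
/- Let q = 2^m with m ≥ 2. The number of triples (a,b,c) ∈ (F_q^*)^3 such that the quadratic a + bx + cx^2 is irreducible over F_q equals (q-1)^3 - (q-1)^2(q-2)/2 = (q/2)(q-1)^2. -/
open Polynomial Finset
open scoped Classical

section Aux
variable {F : Type*} [Field F] [Fintype F]

lemma char2_of_card {m : ℕ} (hq : Fintype.card F = 2 ^ m) (hm : 1 ≤ m) : CharP F 2 := by
  obtain ⟨n, hp, h⟩ := FiniteField.card F (ringChar F)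
  have h2 : ringChar F = 2 := by
    have hdvd : ringChar F ∣ 2 ^ m := by
      rw [← hq, h]; exact dvd_pow_self _ (by positivity)
    exact (Nat.prime_dvd_prime_iff_eq hp Nat.prime_two).mp (hp.dvd_of_dvd_pow hdvd)
  exact h2 ▸ ringChar.charP F

lemma sq_surj [CharP F 2] : Function.Surjective (fun x : F => x ^ 2) := by
  apply Finite.surjective_of_injective
  intro x y hxy
  simp only at hxy
  have h0 : (x - y) * (x + y) = 0 := by linear_combination hxy
  rcases mul_eq_zero.mp h0 with h | h
  · exact sub_eq_zero.mp h
  · have hx : x = -y := eq_neg_of_add_eq_zero_left h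
    rwa [CharTwo.neg_eq] at hx

variable [CharP F 2]

lemma image_card2 {b c : F} (hb : b ≠ 0) (hc : c ≠ 0) :
    2 * (univ.image fun x : F => c * x ^ 2 + b * x).card = Fintype.card F := by
  have h2 : (2 : F) = 0 := by exact_mod_cast CharP.cast_eq_zero F 2
  have key : ∀ y ∈ univ.image fun x : F => c * x ^ 2 + b * x,
      (univ.filter fun x : F => c * x ^ 2 + b * x = y).card = 2 := by
    intro y hy
    obtain ⟨x₀, -, rfl⟩ := Finset.mem_image.mp hy
    have hset : (univ.filter fun x : F => c * x ^ 2 + b * x = c * x₀ ^ 2 + b * x₀)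
        = {x₀, b / c + x₀} := by
      ext x
      simp only [Finset.mem_filter, Finset.mem_univ, true_and, Finset.mem_insert,
        Finset.mem_singleton]
      constructor
      · intro hgx
        have hfac : (x - x₀) * (c * (x + x₀) + b) = 0 := by linear_combination hgx
        rcases mul_eq_zero.mp hfac with h | h
        · exact Or.inl (sub_eq_zero.mp h)
        · right
          have hcc : c * x = c * (b / c + x₀) := by
            have hbc : c * (b / c) = b := by field_simp
            linear_combination h - (c * x₀ + b) * h2 + hbc + (b - c * b * c⁻¹) * h2
          exact mul_left_cancel₀ hc hcc
      · rintro (rfl | rfl)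
        · rfl
        · have hbc : c * (b / c) = b := by field_simp
          linear_combination (b / c + 2 * x₀) * hbc + (b * x₀) * h2 + (b ^ 2 * c⁻¹) * h2
    rw [hset, Finset.card_insert_of_notMem, Finset.card_singleton]
    simp only [Finset.mem_singleton]
    intro h
    apply hb
    have : b / c = 0 := by linear_combination -h
    field_simp at this
    simpa using this
  have hfib := Finset.card_eq_sum_card_fiberwise
    (f := fun x : F => c * x ^ 2 + b * x) (s := univ)
    (t := univ.image fun x : F => c * x ^ 2 + b * x)
    (fun x _ => Finset.mem_image_of_mem _ (Finset.mem_univ x))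
  rw [Finset.card_univ] at hfib
  rw [hfib, Finset.sum_congr rfl key, Finset.sum_const, smul_eq_mul]
  exact Nat.mul_comm _ _

lemma count_slice {b c : F} (hb : b ≠ 0) (hc : c ≠ 0) :
    2 * (univ.filter fun a : F => ∀ x, c * x ^ 2 + b * x + a ≠ 0).card = Fintype.card F := by
  have hfe : (univ.filter fun a : F => ∀ x, c * x ^ 2 + b * x + a ≠ 0)
      = univ \ (univ.image fun x : F => c * x ^ 2 + b * x) := by
    ext a
    simp only [mem_filter, mem_univ, true_and, mem_sdiff, mem_image, not_exists]
    constructor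
    · intro h x hx'
      exact h x (by rw [hx']; exact CharTwo.add_self_eq_zero a)
    · intro h x hx
      have hgx : c * x ^ 2 + b * x = -a := eq_neg_of_add_eq_zero_left hx
      rw [CharTwo.neg_eq] at hgx
      exact h x hgx
  have himg := image_card2 hb hc
  rw [hfe, card_sdiff_of_subset (subset_univ _), card_univ]
  omega

lemma irr_iff {a b c : F} (hc : c ≠ 0) :
    (a ≠ 0 ∧ b ≠ 0 ∧ c ≠ 0 ∧ Irreducible (C a + C b * X + C c * X ^ 2 : F[X]))
      ↔ ∀ x, c * x ^ 2 + b * x + a ≠ 0 := by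
  set p : F[X] := C a + C b * X + C c * X ^ 2 with hp
  have hpq : p = C c * X ^ 2 + C b * X + C a := by rw [hp]; ring
  have hdeg : p.natDegree = 2 := by rw [hpq]; exact natDegree_quadratic hc
  have hp0 : p ≠ 0 := fun h => by simp [h] at hdeg
  have heval : ∀ x : F, p.eval x = c * x ^ 2 + b * x + a := by
    intro x; simp only [hp, eval_add, eval_mul, eval_C, eval_X, eval_pow]; ring
  constructor
  · rintro ⟨-, -, -, hirr⟩ x hx
    have hroots := (irreducible_iff_roots_eq_zero_of_degree_le_three
      (by omega) (by omega)).mp hirr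
    have hmem : x ∈ p.roots := (mem_roots hp0).mpr (by rw [IsRoot, heval]; exact hx)
    rw [hroots] at hmem
    exact Multiset.notMem_zero x hmem
  · intro h
    have ha : a ≠ 0 := by have := h 0; simpa using this
    have hb : b ≠ 0 := by
      intro hb0
      obtain ⟨x, hx⟩ := sq_surj (F := F) (a / c)
      apply h x
      simp only at hx
      rw [hb0, hx, mul_div_cancel₀ _ hc, zero_mul, add_zero]
      exact CharTwo.add_self_eq_zero a
    refine ⟨ha, hb, hc, ?_⟩
    rw [irreducible_iff_roots_eq_zero_of_degree_le_three (by omega) (by omega),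
      Multiset.eq_zero_iff_forall_notMem]
    intro x hx
    rw [mem_roots hp0] at hx
    exact h x (by rw [← heval]; exact hx)

end Aux

theorem stmt10 (F : Type*) [Field F] [Fintype F]
    (m : ℕ) (hm : 2 ≤ m) (hq : Fintype.card F = 2 ^ m) :
    {t : F × F × F | t.1 ≠ 0 ∧ t.2.1 ≠ 0 ∧ t.2.2 ≠ 0 ∧
        Irreducible (Polynomial.C t.1 + Polynomial.C t.2.1 * Polynomial.X +
          Polynomial.C t.2.2 * Polynomial.X ^ 2 : Polynomial F)}.ncard
      = (Fintype.card F / 2) * (Fintype.card F - 1) ^ 2 := by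
  have hchar : CharP F 2 := char2_of_card hq (by omega)
  rw [Set.ncard_eq_toFinset_card']
  simp only [Set.toFinset_setOf]
  have hfilter : (univ.filter fun t : F × F × F => t.1 ≠ 0 ∧ t.2.1 ≠ 0 ∧ t.2.2 ≠ 0 ∧
        Irreducible (C t.1 + C t.2.1 * X + C t.2.2 * X ^ 2 : F[X]))
      = univ.filter (fun t : F × F × F => t.2.2 ≠ 0 ∧ ∀ x, t.2.2 * x ^ 2 + t.2.1 * x + t.1 ≠ 0) := by
    ext t
    simp only [mem_filter, mem_univ, true_and]
    constructor
    · intro h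
      exact ⟨h.2.2.1, (irr_iff h.2.2.1).mp h⟩
    · intro h
      exact (irr_iff h.1).mpr h.2
  rw [hfilter, Finset.card_filter, Fintype.sum_prod_type, Finset.sum_comm]
  have inner : ∀ y : F × F,
      (∑ a : F, if y.2 ≠ 0 ∧ ∀ x, y.2 * x ^ 2 + y.1 * x + a ≠ 0 then 1 else 0)
      = if y.1 ≠ 0 ∧ y.2 ≠ 0 then 2 ^ (m - 1) else 0 := by
    rintro ⟨b, c⟩
    simp only
    rw [← Finset.card_filter]
    by_cases hc : c = 0
    · subst hc
      simp
    · by_cases hb : b = 0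
      · subst hb
        have hempty : (univ.filter fun a : F => (c : F) ≠ 0 ∧
            ∀ x, c * x ^ 2 + (0:F) * x + a ≠ 0) = ∅ := by
          ext a
          simp only [mem_filter, mem_univ, true_and, Finset.notMem_empty, iff_false, not_and,
            not_forall, not_not]
          intro _
          obtain ⟨x, hx⟩ := sq_surj (F := F) (a / c)
          refine ⟨x, ?_⟩
          simp only at hx
          rw [hx, mul_div_cancel₀ _ hc, zero_mul, add_zero]
          exact CharTwo.add_self_eq_zero a
        rw [hempty]
        simp
      · have hdrop : (univ.filter fun a : F => (c : F) ≠ 0 ∧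
            ∀ x, c * x ^ 2 + b * x + a ≠ 0)
            = (univ.filter fun a : F => ∀ x, c * x ^ 2 + b * x + a ≠ 0) := by
          apply Finset.filter_congr
          intro a _
          simp [hc]
        rw [hdrop]
        have hcount := count_slice hb hc
        rw [hq] at hcount
        have h2m : 2 ^ m = 2 * 2 ^ (m - 1) := by
          rw [← pow_succ']; congr 1; omega
        rw [if_pos ⟨hb, hc⟩]
        omega
  rw [Finset.sum_congr rfl (fun y _ => inner y)]
  rw [← Finset.sum_filter, Finset.sum_const, smul_eq_mul]
  have hprod : (univ.filter fun y : F × F => y.1 ≠ 0 ∧ y.2 ≠ 0)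
      = (univ.filter fun x : F => x ≠ 0) ×ˢ (univ.filter fun x : F => x ≠ 0) := by
    ext y
    simp [Finset.mem_product, and_comm]
  have hcard : (univ.filter fun y : F × F => y.1 ≠ 0 ∧ y.2 ≠ 0).card
      = (Fintype.card F - 1) * (Fintype.card F - 1) := by
    rw [hprod, Finset.card_product]
    have : (univ.filter fun x : F => x ≠ 0) = univ.erase 0 := by
      rw [← Finset.filter_ne']
    rw [this, Finset.card_erase_of_mem (mem_univ 0), Finset.card_univ]
  rw [hcard, hq]
  have h2m : 2 ^ m = 2 * 2 ^ (m - 1) := by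
    rw [← pow_succ']; congr 1; omega
  rw [h2m, Nat.mul_div_cancel_left _ (by norm_num), sq]
  ring
end

section
/- Let q be a prime power and 0 ≤ k, l ≤ q-2. Let P be the rectangle [0,k] × [0,l] in Z^2. The minimum distance of the toric code C_P(F_q) equals (q-1-k)(q-1-l). -/
open Polynomial Finset

private lemma aux_coeff {F : Type*} [Field F] (n : ℕ) (a : Fin (n+1) → F) (j : Fin (n+1)) :
    (∑ i : Fin (n+1), C (a i) * X^(i:ℕ)).coeff (j : ℕ) = a j := by
  rw [Polynomial.finset_sum_coeff]
  simp only [Polynomial.coeff_C_mul, Polynomial.coeff_X_pow, mul_ite, mul_one, mul_zero]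
  rw [Finset.sum_eq_single j (fun b _ hb => by
    rw [if_neg (fun h => hb (Fin.val_injective h).symm)]) (by simp)]
  simp

private lemma aux_deg {F : Type*} [Field F] (n : ℕ) (a : Fin (n+1) → F) :
    (∑ i : Fin (n+1), C (a i) * X^(i:ℕ)).natDegree ≤ n := by
  apply Polynomial.natDegree_sum_le_of_forall_le
  intro i _
  exact (Polynomial.natDegree_C_mul_le _ _).trans
    (by simp [Polynomial.natDegree_X_pow, Nat.lt_succ_iff.mp i.isLt])

private lemma aux_eval {F : Type*} [Field F] (n : ℕ) (a : Fin (n+1) → F) (x : F) :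
    (∑ i : Fin (n+1), C (a i) * X^(i:ℕ)).eval x = ∑ i : Fin (n+1), a i * x^(i:ℕ) := by
  simp [Polynomial.eval_finset_sum]

private lemma aux_count {F : Type*} [Field F] [Fintype F] [DecidableEq F]
    (p : F[X]) (hp : p ≠ 0) (d : ℕ) (hd : p.natDegree ≤ d) :
    (Fintype.card F - 1) - d ≤ (univ.filter (fun y : F => y ≠ 0 ∧ p.eval y ≠ 0)).card := by
  have hsub : (univ.filter (fun y : F => y ≠ 0)) ⊆
      (univ.filter (fun y : F => y ≠ 0 ∧ p.eval y ≠ 0)) ∪ (univ.filter (fun y : F => p.eval y = 0)) := by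
    intro y hy
    simp only [mem_filter, mem_univ, true_and, mem_union] at *
    by_cases h : p.eval y = 0 <;> tauto
  have hroots : (univ.filter (fun y : F => p.eval y = 0)).card ≤ d := by
    calc (univ.filter (fun y : F => p.eval y = 0)).card ≤ p.roots.toFinset.card := by
          apply Finset.card_le_card
          intro y hy
          simp only [mem_filter, mem_univ, true_and] at hy
          simp [Multiset.mem_toFinset, Polynomial.mem_roots hp, Polynomial.IsRoot, hy]
      _ ≤ Multiset.card p.roots := Multiset.toFinset_card_le _
      _ ≤ p.natDegree := Polynomial.card_roots' p
      _ ≤ d := hd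
  have hne : (univ.filter (fun y : F => y ≠ 0)).card = Fintype.card F - 1 := by
    rw [Finset.filter_ne' univ 0, Finset.card_erase_of_mem (mem_univ 0), Finset.card_univ]
  have := (Finset.card_le_card hsub).trans (Finset.card_union_le _ _)
  omega

theorem stmt16 (F : Type*) [Field F] [Fintype F]
    (k l : ℕ) (hk : k ≤ Fintype.card F - 2) (hl : l ≤ Fintype.card F - 2) :
    IsLeast {w : ℕ | ∃ c : Fin (k + 1) × Fin (l + 1) → F, c ≠ 0 ∧
        {p : F × F | p.1 ≠ 0 ∧ p.2 ≠ 0 ∧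
          (∑ ij : Fin (k + 1) × Fin (l + 1),
            c ij * p.1 ^ (ij.1 : ℕ) * p.2 ^ (ij.2 : ℕ)) ≠ 0}.ncard = w}
      ((Fintype.card F - 1 - k) * (Fintype.card F - 1 - l)) := by
  classical
  set q := Fintype.card F with hq
  have hq2 : 2 ≤ q := Fintype.one_lt_card
  constructor
  · -- membership
    obtain ⟨t, hts, htc⟩ := Finset.exists_subset_card_eq (s := univ.erase (0:F)) (n := k)
      (by rw [card_erase_of_mem (mem_univ 0), card_univ]; omega)
    obtain ⟨s, hss, hsc⟩ := Finset.exists_subset_card_eq (s := univ.erase (0:F)) (n := l)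
      (by rw [card_erase_of_mem (mem_univ 0), card_univ]; omega)
    set A : F[X] := ∏ a ∈ t, (X - C a) with hA
    set B : F[X] := ∏ a ∈ s, (X - C a) with hB
    have hAm : A.Monic := monic_prod_of_monic _ _ (fun a _ => monic_X_sub_C a)
    have hBm : B.Monic := monic_prod_of_monic _ _ (fun a _ => monic_X_sub_C a)
    have hAdeg : A.natDegree = k := by
      rw [hA, Polynomial.natDegree_prod _ _ (fun a _ => X_sub_C_ne_zero a)]
      simp [htc]
    have hBdeg : B.natDegree = l := by
      rw [hB, Polynomial.natDegree_prod _ _ (fun a _ => X_sub_C_ne_zero a)]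
      simp [hsc]
    have hAz : ∀ x : F, A.eval x = 0 ↔ x ∈ t := by
      intro x
      rw [hA, Polynomial.eval_prod, Finset.prod_eq_zero_iff]
      simp [sub_eq_zero, eq_comm]
    have hBz : ∀ x : F, B.eval x = 0 ↔ x ∈ s := by
      intro x
      rw [hB, Polynomial.eval_prod, Finset.prod_eq_zero_iff]
      simp [sub_eq_zero, eq_comm]
    have hAk : A.coeff k = 1 := by rw [← hAdeg]; exact hAm.coeff_natDegree
    have hBl : B.coeff l = 1 := by rw [← hBdeg]; exact hBm.coeff_natDegree
    refine ⟨fun ij => A.coeff ij.1 * B.coeff ij.2, ?_, ?_⟩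
    · intro h
      have := congrFun h (⟨k, k.lt_succ_self⟩, ⟨l, l.lt_succ_self⟩)
      simp [hAk, hBl] at this
    · have hsum : ∀ x y : F,
          (∑ ij : Fin (k + 1) × Fin (l + 1),
            (A.coeff ij.1 * B.coeff ij.2) * x ^ (ij.1 : ℕ) * y ^ (ij.2 : ℕ))
          = A.eval x * B.eval y := by
        intro x y
        rw [Fintype.sum_prod_type,
          Polynomial.eval_eq_sum_range' (show A.natDegree < k + 1 by omega) x,
          Polynomial.eval_eq_sum_range' (show B.natDegree < l + 1 by omega) y,
          ← Fin.sum_univ_eq_sum_range, ← Fin.sum_univ_eq_sum_range, Finset.sum_mul_sum]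
        apply Finset.sum_congr rfl
        intro i _
        apply Finset.sum_congr rfl
        intro j _
        ring
      set Sx := univ.filter (fun x : F => x ≠ 0 ∧ A.eval x ≠ 0) with hSx
      set Sy := univ.filter (fun y : F => y ≠ 0 ∧ B.eval y ≠ 0) with hSy
      have hset : {p : F × F | p.1 ≠ 0 ∧ p.2 ≠ 0 ∧
          (∑ ij : Fin (k + 1) × Fin (l + 1),
            (A.coeff ij.1 * B.coeff ij.2) * p.1 ^ (ij.1 : ℕ) * p.2 ^ (ij.2 : ℕ)) ≠ 0}
          = ↑(Sx ×ˢ Sy) := by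
        ext p
        simp only [Set.mem_setOf_eq, Finset.coe_product, Set.mem_prod, hSx, hSy,
          Finset.mem_coe, mem_filter, mem_univ, true_and, hsum, mul_ne_zero_iff]
        tauto
      rw [hset, Set.ncard_coe_finset, Finset.card_product]
      have hcx : Sx.card = q - 1 - k := by
        have : Sx = (univ.erase (0:F)) \ t := by
          ext x
          simp only [hSx, mem_filter, mem_univ, true_and, mem_sdiff, mem_erase, ne_eq, hAz]
          tauto
        rw [this, card_sdiff_of_subset hts, card_erase_of_mem (mem_univ 0), card_univ, htc]
      have hcy : Sy.card = q - 1 - l := by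
        have : Sy = (univ.erase (0:F)) \ s := by
          ext x
          simp only [hSy, mem_filter, mem_univ, true_and, mem_sdiff, mem_erase, ne_eq, hBz]
          tauto
        rw [this, card_sdiff_of_subset hss, card_erase_of_mem (mem_univ 0), card_univ, hsc]
      rw [hcx, hcy]
  · -- lower bound
    rintro w ⟨c, hc, hS⟩
    obtain ⟨⟨i0, j0⟩, hij⟩ : ∃ ij, c ij ≠ 0 := by
      by_contra h
      push_neg at h
      exact hc (funext fun ij => h ij)
    set g : F[X] := ∑ j : Fin (l+1), C (c (i0, j)) * X^(j:ℕ) with hgdef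
    have hg : g ≠ 0 := by
      intro h
      apply hij
      have := aux_coeff l (fun j => c (i0, j)) j0
      rw [← hgdef, h] at this
      simpa using this.symm
    have key : ∀ y : F, y ≠ 0 → g.eval y ≠ 0 →
        (q - 1 - k) ≤ (univ.filter (fun x : F => x ≠ 0 ∧ y ≠ 0 ∧
          (∑ ij : Fin (k + 1) × Fin (l + 1), c ij * x ^ (ij.1 : ℕ) * y ^ (ij.2 : ℕ)) ≠ 0)).card := by
      intro y hy hgy
      set py : F[X] := ∑ i : Fin (k+1), C (∑ j : Fin (l+1), c (i, j) * y^(j:ℕ)) * X^(i:ℕ) with hpydef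
      have hpy : py ≠ 0 := by
        intro h
        apply hgy
        have h2 := aux_coeff k (fun i => ∑ j : Fin (l+1), c (i, j) * y^(j:ℕ)) i0
        rw [← hpydef, h] at h2
        rw [hgdef, aux_eval]
        simpa using h2.symm
      have heval : ∀ x : F, py.eval x =
          ∑ ij : Fin (k + 1) × Fin (l + 1), c ij * x ^ (ij.1 : ℕ) * y ^ (ij.2 : ℕ) := by
        intro x
        rw [hpydef, aux_eval, Fintype.sum_prod_type]
        apply Finset.sum_congr rfl
        intro i _
        rw [Finset.sum_mul]
        apply Finset.sum_congr rfl
        intro j _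
        ring
      have hcount := aux_count py hpy k (aux_deg k _)
      have hfeq : (univ.filter (fun x : F => x ≠ 0 ∧ py.eval x ≠ 0))
          = (univ.filter (fun x : F => x ≠ 0 ∧ y ≠ 0 ∧
            (∑ ij : Fin (k + 1) × Fin (l + 1), c ij * x ^ (ij.1 : ℕ) * y ^ (ij.2 : ℕ)) ≠ 0)) := by
        apply Finset.filter_congr
        intro x _
        rw [heval x]
        tauto
      rw [hfeq] at hcount
      exact hcount
    set T := univ.filter (fun p : F × F => p.1 ≠ 0 ∧ p.2 ≠ 0 ∧
      (∑ ij : Fin (k + 1) × Fin (l + 1), c ij * p.1 ^ (ij.1 : ℕ) * p.2 ^ (ij.2 : ℕ)) ≠ 0) with hT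
    have hw : w = T.card := by
      rw [← hS, show {p : F × F | p.1 ≠ 0 ∧ p.2 ≠ 0 ∧
          (∑ ij : Fin (k + 1) × Fin (l + 1),
            c ij * p.1 ^ (ij.1 : ℕ) * p.2 ^ (ij.2 : ℕ)) ≠ 0} = ↑T from by
        ext p; simp [hT]]
      exact Set.ncard_coe_finset T
    have hTcard : T.card = ∑ y : F, (univ.filter (fun x : F => x ≠ 0 ∧ y ≠ 0 ∧
        (∑ ij : Fin (k + 1) × Fin (l + 1), c ij * x ^ (ij.1 : ℕ) * y ^ (ij.2 : ℕ)) ≠ 0)).card := by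
      rw [hT, Finset.card_filter, Fintype.sum_prod_type, Finset.sum_comm]
      apply Finset.sum_congr rfl
      intro y _
      rw [Finset.card_filter]
    set G := univ.filter (fun y : F => y ≠ 0 ∧ g.eval y ≠ 0) with hGdef
    have hG : q - 1 - l ≤ G.card := aux_count g hg l (aux_deg l _)
    have hchain : (q - 1 - l) * (q - 1 - k) ≤ T.card := by
      rw [hTcard]
      calc (q - 1 - l) * (q - 1 - k) ≤ G.card * (q - 1 - k) :=
            Nat.mul_le_mul_right _ hG
        _ ≤ ∑ y ∈ G, (univ.filter (fun x : F => x ≠ 0 ∧ y ≠ 0 ∧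
            (∑ ij : Fin (k + 1) × Fin (l + 1), c ij * x ^ (ij.1 : ℕ) * y ^ (ij.2 : ℕ)) ≠ 0)).card := by
            rw [← smul_eq_mul]
            apply Finset.card_nsmul_le_sum
            intro y hy
            rw [hGdef, mem_filter] at hy
            exact key y hy.2.1 hy.2.2
        _ ≤ ∑ y : F, (univ.filter (fun x : F => x ≠ 0 ∧ y ≠ 0 ∧
            (∑ ij : Fin (k + 1) × Fin (l + 1), c ij * x ^ (ij.1 : ℕ) * y ^ (ij.2 : ℕ)) ≠ 0)).card :=
            Finset.sum_le_sum_of_subset (Finset.subset_univ G)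
    rw [hw]
    calc (q - 1 - k) * (q - 1 - l) = (q - 1 - l) * (q - 1 - k) := Nat.mul_comm _ _
      _ ≤ T.card := hchain
end

section
/- Let q be a prime power and n ≥ 1. If two convex lattice polytopes P_1, P_2 ⊂ [0, q-2]^m are related by a unimodular affine transformation T(x) = Mx + λ with M ∈ GL(m, Z), det M = ±1, λ ∈ Z^m, and T(P_1) = P_2, then the toric codes C_{P_1}(F_q) and C_{P_2}(F_q) have equal weight enumerators; in particular they have the same dimension and the same minimum distance. -/
namespace Stmt19Aux

lemma zpow_finsum {G : Type*} [CommGroup G] {ι : Type*} (a : G) (s : Finset ι) (f : ι → ℤ) :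
    a ^ (∑ i ∈ s, f i) = ∏ i ∈ s, a ^ f i := by
  classical
  induction s using Finset.induction with
  | empty => simp
  | insert _ _ h ih => simp [Finset.sum_insert h, Finset.prod_insert h, zpow_add, ih]

variable {F : Type*} [Field F] {m : ℕ}

/-- substitution map on the torus induced by a matrix -/
def sig (M : Matrix (Fin m) (Fin m) ℤ) (a : Fin m → Fˣ) : Fin m → Fˣ :=
  fun j => ∏ i, a i ^ M i j

lemma sig_sig (M N : Matrix (Fin m) (Fin m) ℤ) (a : Fin m → Fˣ) :
    sig N (sig M a) = sig (M * N) a := by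
  funext j
  simp only [sig, Matrix.mul_apply]
  calc ∏ i, (∏ k, a k ^ M k i) ^ N i j
      = ∏ i, ∏ k, a k ^ (M k i * N i j) := by
        refine Finset.prod_congr rfl fun i _ => ?_
        rw [← Finset.prod_zpow]
        exact Finset.prod_congr rfl fun k _ => (zpow_mul _ _ _).symm
    _ = ∏ k, ∏ i, a k ^ (M k i * N i j) := Finset.prod_comm
    _ = ∏ k, a k ^ (∑ i, M k i * N i j) := by
        refine Finset.prod_congr rfl fun k _ => (zpow_finsum _ _ _).symm

lemma sig_one (a : Fin m → Fˣ) : sig (1 : Matrix (Fin m) (Fin m) ℤ) a = a := by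
  funext j
  simp [sig, Matrix.one_apply, apply_ite (fun n : ℤ => a _ ^ n)]

lemma key (M : Matrix (Fin m) (Fin m) ℤ) (lam p : Fin m → ℤ) (a : Fin m → Fˣ) :
    (∏ i, a i ^ (M.mulVec p + lam) i) = (∏ i, a i ^ lam i) * ∏ j, (sig M a j) ^ p j := by
  simp only [Pi.add_apply, zpow_add, Finset.prod_mul_distrib]
  rw [mul_comm]
  congr 1
  calc ∏ i, a i ^ M.mulVec p i
      = ∏ i, ∏ j, (a i ^ M i j) ^ p j := by
        refine Finset.prod_congr rfl fun i _ => ?_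
        rw [Matrix.mulVec, dotProduct, zpow_finsum]
        exact Finset.prod_congr rfl fun j _ => (zpow_mul _ _ _)
    _ = ∏ j, ∏ i, (a i ^ M i j) ^ p j := Finset.prod_comm
    _ = ∏ j, (sig M a j) ^ p j := by
        refine Finset.prod_congr rfl fun j _ => ?_
        rw [sig, Finset.prod_zpow]

end Stmt19Aux

open Stmt19Aux
theorem stmt19 (F : Type*) [Field F] [Fintype F]
    (m : ℕ) (hm : 1 ≤ m)
    (A1 A2 : Finset (Fin m → ℤ))
    (hb1 : ∀ p ∈ A1, ∀ i, 0 ≤ p i ∧ p i ≤ (Fintype.card F : ℤ) - 2)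
    (hb2 : ∀ p ∈ A2, ∀ i, 0 ≤ p i ∧ p i ≤ (Fintype.card F : ℤ) - 2)
    (M : Matrix (Fin m) (Fin m) ℤ) (hdet : M.det = 1 ∨ M.det = -1)
    (lam : Fin m → ℤ)
    (hT : A2 = A1.image (fun p => M.mulVec p + lam)) :
    let mono : (Fin m → ℤ) → (Fin m → Fˣ) → F :=
      fun s a => ∏ i, ((a i ^ s i : Fˣ) : F)
    let C1 := Submodule.span F (mono '' (A1 : Set (Fin m → ℤ)))
    let C2 := Submodule.span F (mono '' (A2 : Set (Fin m → ℤ)))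
    let wt : ((Fin m → Fˣ) → F) → ℕ := fun w => {a : Fin m → Fˣ | w a ≠ 0}.ncard
    (∀ n : ℕ, {w | w ∈ C1 ∧ wt w = n}.ncard = {w | w ∈ C2 ∧ wt w = n}.ncard) ∧
    Module.finrank F C1 = Module.finrank F C2 ∧
    sInf {n : ℕ | ∃ w ∈ C1, w ≠ 0 ∧ wt w = n} = sInf {n : ℕ | ∃ w ∈ C2, w ≠ 0 ∧ wt w = n} := by
  intro mono C1 C2 wt
  -- M is invertible over ℤ
  have hunit : IsUnit M.det := by
    rcases hdet with h | h <;> rw [h]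
    · exact isUnit_one
    · exact Int.isUnit_iff.mpr (Or.inr rfl)
  haveI : Invertible M := M.invertibleOfIsUnitDet hunit
  set N : Matrix (Fin m) (Fin m) ℤ := ⅟M with hN
  have hMN : M * N = 1 := mul_invOf_self M
  have hNM : N * M = 1 := invOf_mul_self M
  -- the torus substitution is a bijection
  have hls : Function.LeftInverse (sig N (F := F)) (sig M) := fun a => by
    rw [sig_sig, hMN, sig_one]
  have hrs : Function.RightInverse (sig N (F := F)) (sig M) := fun a => by
    rw [sig_sig, hNM, sig_one]
  set σ : (Fin m → Fˣ) ≃ (Fin m → Fˣ) := ⟨sig M, sig N, hls, hrs⟩ with hσ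
  -- unit-valued scaling function
  set u : (Fin m → Fˣ) → Fˣ := fun a => ∏ i, a i ^ lam i with hu
  -- the linear equivalence
  set f : ((Fin m → Fˣ) → F) →ₗ[F] ((Fin m → Fˣ) → F) :=
    { toFun := fun w a => (u a : F) * w (σ a)
      map_add' := fun w v => by funext a; simp [mul_add]
      map_smul' := fun c w => by funext a; simp [Pi.smul_apply, smul_eq_mul]; ring } with hf
  set g : ((Fin m → Fˣ) → F) →ₗ[F] ((Fin m → Fˣ) → F) :=
    { toFun := fun w b => ((u (σ.symm b))⁻¹ : Fˣ) * w (σ.symm b)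
      map_add' := fun w v => by funext a; simp [mul_add]
      map_smul' := fun c w => by funext a; simp [Pi.smul_apply, smul_eq_mul]; ring } with hg
  have hfg : ∀ w, f (g w) = w := by
    intro w; funext a
    simp only [hf, hg, LinearMap.coe_mk, AddHom.coe_mk, Equiv.symm_apply_apply]
    rw [← mul_assoc, ← Units.val_mul, mul_inv_cancel, Units.val_one, one_mul]
  have hgf : ∀ w, g (f w) = w := by
    intro w; funext a
    simp only [hf, hg, LinearMap.coe_mk, AddHom.coe_mk, Equiv.apply_symm_apply]
    rw [← mul_assoc, ← Units.val_mul, inv_mul_cancel, Units.val_one, one_mul]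
  set E : ((Fin m → Fˣ) → F) ≃ₗ[F] ((Fin m → Fˣ) → F) :=
    LinearEquiv.ofLinear f g (LinearMap.ext hfg) (LinearMap.ext hgf) with hE
  have hEapp : ∀ w a, E w a = (u a : F) * w (σ a) := fun w a => rfl
  -- E sends mono p to mono (T p)
  have hEmono : ∀ p : Fin m → ℤ, E (mono p) = mono (M.mulVec p + lam) := by
    intro p; funext a
    have : mono p (σ a) = ((∏ j, (sig M a j) ^ p j : Fˣ) : F) := by
      simp [mono, hσ, sig, Units.coe_prod]
    rw [hEapp, this]
    simp only [mono, hu, ← Units.coe_prod, ← Units.val_mul, ← key M lam p a]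
  -- E preserves weights
  have hwt : ∀ w, wt (E w) = wt w := by
    intro w
    have hset : {a : Fin m → Fˣ | E w a ≠ 0} = σ.symm '' {a | w a ≠ 0} := by
      ext a
      simp only [Set.mem_setOf_eq, hEapp]
      constructor
      · intro h
        exact ⟨σ a, fun h0 => h (by rw [h0, mul_zero]), σ.symm_apply_apply a⟩
      · rintro ⟨b, hb, rfl⟩
        rw [σ.apply_symm_apply]
        exact mul_ne_zero (Units.ne_zero _) hb
    show Set.ncard {a : Fin m → Fˣ | E w a ≠ 0} = Set.ncard {a : Fin m → Fˣ | w a ≠ 0}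
    rw [hset, Set.ncard_image_of_injective _ σ.symm.injective]
  -- E maps C1 onto C2
  have hmap : Submodule.map (E : ((Fin m → Fˣ) → F) →ₗ[F] ((Fin m → Fˣ) → F)) C1 = C2 := by
    rw [Submodule.map_span]
    congr 1
    rw [← Set.image_comp, hT]
    push_cast [Finset.coe_image]
    rw [← Set.image_comp]
    exact Set.image_congr fun p _ => (hEmono p)
  have hmemE : ∀ w, w ∈ C1 ↔ E w ∈ C2 := by
    intro w
    rw [← hmap]
    constructor
    · intro h; exact Submodule.mem_map_of_mem h
    · rintro h
      obtain ⟨v, hv, hve⟩ := h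
      rwa [← E.injective hve]
  refine ⟨?_, ?_, ?_⟩
  · intro n
    have himg : (⇑E) '' {w | w ∈ C1 ∧ wt w = n} = {w | w ∈ C2 ∧ wt w = n} := by
      ext v
      constructor
      · rintro ⟨w, ⟨hw1, hw2⟩, rfl⟩
        exact ⟨(hmemE w).1 hw1, by rw [hwt, hw2]⟩
      · rintro ⟨hv1, hv2⟩
        refine ⟨E.symm v, ⟨?_, ?_⟩, E.apply_symm_apply v⟩
        · rw [hmemE, E.apply_symm_apply]; exact hv1
        · rw [← hv2, ← hwt (E.symm v), E.apply_symm_apply]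
    rw [← himg, Set.ncard_image_of_injective _ E.injective]
  · rw [← hmap]
    exact (LinearEquiv.finrank_map_eq E C1).symm
  · congr 1
    ext n
    simp only [Set.mem_setOf_eq]
    constructor
    · rintro ⟨w, hw, hw0, rfl⟩
      exact ⟨E w, (hmemE w).1 hw, fun h => hw0 (by simpa using E.injective (h.trans (map_zero E).symm)), (hwt w).symm ▸ rfl⟩
    · rintro ⟨v, hv, hv0, rfl⟩
      refine ⟨E.symm v, (hmemE _).2 (by rw [E.apply_symm_apply]; exact hv), ?_, ?_⟩
      · intro h; apply hv0; rw [← E.apply_symm_apply v, h, map_zero]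
      · rw [← hwt (E.symm v), E.apply_symm_apply]
end
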